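/- Let d₁,…,d_m be even natural numbers with at least two of them positive, and let μ_p(j) denote the j-th moment of the chi distribution with p degrees of freedom. Then τ(d₁,…,d_m) := (∏_{i=1}^m μ_p(d_i)) / μ_p(Σ_i d_i) ≤ p/(p+2). -/

import Mathlib

open Real Finset

/-- Rising factorial (Pochhammer) product. -/
noncomputable def Rpoch (a : ℝ) (k : ℕ) : ℝ := ∏ t ∈ Finset.range k, (a + t)

lemma Rpoch_pos {a : ℝ} (ha : 0 < a) (k : ℕ) : 0 < Rpoch a k :=
  Finset.prod_pos fun t _ => by positivity

lemma Rpoch_succ (a : ℝ) (k : ℕ) : Rpoch a (k + 1) = Rpoch a k * (a + k) :=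
  Finset.prod_range_succ _ _

lemma Rpoch_one (a : ℝ) : Rpoch a 1 = a := by simp [Rpoch]

lemma Rpoch_add (a : ℝ) (j k : ℕ) : Rpoch a (j + k) = Rpoch a j * Rpoch (a + j) k := by
  induction k with
  | zero => simp [Rpoch]
  | succ n ih =>
    rw [← Nat.add_assoc, Rpoch_succ, ih, Rpoch_succ, mul_assoc]
    push_cast
    ring

lemma Rpoch_mono {a b : ℝ} (ha : 0 < a) (hab : a ≤ b) (k : ℕ) : Rpoch a k ≤ Rpoch b k :=
  Finset.prod_le_prod (fun t _ => by positivity) (fun t _ => by linarith)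

lemma Rpoch_mul_le {a : ℝ} (ha : 0 < a) (j k : ℕ) :
    Rpoch a j * Rpoch a k ≤ Rpoch a (j + k) := by
  rw [Rpoch_add]
  exact mul_le_mul_of_nonneg_left
    (Rpoch_mono ha (by have : (0:ℝ) ≤ j := Nat.cast_nonneg j; linarith) k)
    (Rpoch_pos ha j).le

lemma Rpoch_key {a : ℝ} (ha : 0 < a) {j k : ℕ} (hj : 1 ≤ j) (hk : 1 ≤ k) :
    Rpoch a k ≤ a / (a + 1) * Rpoch (a + j) k := by
  obtain ⟨k', rfl⟩ := Nat.exists_eq_add_of_le hk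
  have hj' : (1:ℝ) ≤ j := by exact_mod_cast hj
  rw [Rpoch_add a 1 k', Rpoch_add (a + j) 1 k', Rpoch_one, Rpoch_one]
  push_cast
  have h1 : Rpoch (a + 1) k' ≤ Rpoch (a + j + 1) k' :=
    Rpoch_mono (by linarith) (by linarith) k'
  have h2 : a ≤ a / (a + 1) * (a + j) := by
    rw [div_mul_eq_mul_div, le_div_iff₀ (by linarith)]
    nlinarith
  calc a * Rpoch (a + 1) k' ≤ (a / (a + 1) * (a + j)) * Rpoch (a + j + 1) k' :=
        mul_le_mul h2 h1 (Rpoch_pos (by linarith) k').le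
          (by positivity)
    _ = a / (a + 1) * ((a + j) * Rpoch (a + j + 1) k') := by ring

lemma Rpoch_prod_le {a : ℝ} (ha : 0 < a) {ι : Type*} (s : Finset ι) (k : ι → ℕ) :
    ∏ i ∈ s, Rpoch a (k i) ≤ Rpoch a (∑ i ∈ s, k i) := by
  classical
  induction s using Finset.induction with
  | empty => simp [Rpoch]
  | insert _ _ hx ih =>
    rename_i x s'
    rw [Finset.prod_insert hx, Finset.sum_insert hx]
    calc Rpoch a (k x) * ∏ i ∈ s', Rpoch a (k i)
        ≤ Rpoch a (k x) * Rpoch a (∑ i ∈ s', k i) :=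
          mul_le_mul_of_nonneg_left ih (Rpoch_pos ha _).le
      _ ≤ Rpoch a (k x + ∑ i ∈ s', k i) := Rpoch_mul_le ha _ _

lemma Gamma_Rpoch {a : ℝ} (ha : 0 < a) (k : ℕ) :
    Real.Gamma (a + k) = Rpoch a k * Real.Gamma a := by
  induction k with
  | zero => simp [Rpoch]
  | succ n ih =>
    have h : a + ((n : ℕ) + 1 : ℕ) = (a + n) + 1 := by push_cast; ring
    have hne : a + (n:ℝ) ≠ 0 := by positivity
    rw [h, Real.Gamma_add_one hne, ih, Rpoch_succ]
    ring

lemma Rpoch_main {m : ℕ} {a : ℝ} (ha : 0 < a) (k : Fin m → ℕ)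
    (i₀ j₀ : Fin m) (hne : i₀ ≠ j₀) (hki : 1 ≤ k i₀) (hkj : 1 ≤ k j₀) :
    ∏ i, Rpoch a (k i) ≤ a / (a + 1) * Rpoch a (∑ i, k i) := by
  classical
  have hj₀mem : j₀ ∈ Finset.univ.erase i₀ := Finset.mem_erase.mpr ⟨hne.symm, Finset.mem_univ _⟩
  set s : Finset (Fin m) := (Finset.univ.erase i₀).erase j₀ with hs
  have hprod : ∏ i, Rpoch a (k i)
      = Rpoch a (k i₀) * (Rpoch a (k j₀) * ∏ i ∈ s, Rpoch a (k i)) := by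
    rw [← Finset.mul_prod_erase Finset.univ _ (Finset.mem_univ i₀),
        ← Finset.mul_prod_erase _ _ hj₀mem]
  have hsum : ∑ i, k i = k i₀ + (k j₀ + ∑ i ∈ s, k i) := by
    rw [← Finset.add_sum_erase Finset.univ _ (Finset.mem_univ i₀),
        ← Finset.add_sum_erase _ _ hj₀mem]
  rw [hprod, hsum]
  have h1 : Rpoch a (k i₀) * Rpoch a (k j₀) ≤ a / (a + 1) * Rpoch a (k i₀ + k j₀) := by
    rw [Rpoch_add]
    calc Rpoch a (k i₀) * Rpoch a (k j₀)
        ≤ Rpoch a (k i₀) * (a / (a + 1) * Rpoch (a + k i₀) (k j₀)) :=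
          mul_le_mul_of_nonneg_left (Rpoch_key ha hki hkj) (Rpoch_pos ha _).le
      _ = a / (a + 1) * (Rpoch a (k i₀) * Rpoch (a + k i₀) (k j₀)) := by ring
  have h2 : ∏ i ∈ s, Rpoch a (k i) ≤ Rpoch a (∑ i ∈ s, k i) := Rpoch_prod_le ha s k
  have hprodpos : (0:ℝ) < ∏ i ∈ s, Rpoch a (k i) :=
    Finset.prod_pos fun i _ => Rpoch_pos ha _
  calc Rpoch a (k i₀) * (Rpoch a (k j₀) * ∏ i ∈ s, Rpoch a (k i))
      = (Rpoch a (k i₀) * Rpoch a (k j₀)) * ∏ i ∈ s, Rpoch a (k i) := by ring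
    _ ≤ (a / (a + 1) * Rpoch a (k i₀ + k j₀)) * Rpoch a (∑ i ∈ s, k i) :=
        mul_le_mul h1 h2 hprodpos.le (mul_nonneg (by positivity) (Rpoch_pos ha _).le)
    _ = a / (a + 1) * (Rpoch a (k i₀ + k j₀) * Rpoch a (∑ i ∈ s, k i)) := by ring
    _ ≤ a / (a + 1) * Rpoch a (k i₀ + k j₀ + ∑ i ∈ s, k i) := by
        apply mul_le_mul_of_nonneg_left (Rpoch_mul_le ha _ _) (by positivity)
    _ = a / (a + 1) * Rpoch a (k i₀ + (k j₀ + ∑ i ∈ s, k i)) := by rw [Nat.add_assoc]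

/-- For even `d₁, …, d_m` with at least two positive, the ratio
`τ = (∏ μ_p(dᵢ)) / μ_p(Σ dᵢ)` of chi-distribution moments is at most `p/(p+2)`. -/
theorem stmt_13 (p m : ℕ) (hp : 0 < p)
    (μ : ℕ → ℝ)
    (hμ : ∀ j : ℕ, μ j = 2 ^ ((j : ℝ) / 2) * Real.Gamma ((p + j) / 2) / Real.Gamma (p / 2))
    (d : Fin m → ℕ) (heven : ∀ i, Even (d i))
    (htwo : ∃ i j : Fin m, i ≠ j ∧ 0 < d i ∧ 0 < d j) :
    (∏ i, μ (d i)) / μ (∑ i, d i) ≤ p / (p + 2) := by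
  classical
  set a : ℝ := (p : ℝ) / 2 with ha_def
  have ha : 0 < a := by
    have : (0:ℝ) < p := by exact_mod_cast hp
    positivity
  have hΓa : 0 < Real.Gamma a := Real.Gamma_pos_of_pos ha
  -- halve the d's
  set k : Fin m → ℕ := fun i => d i / 2 with hk_def
  have hdk : ∀ i, d i = 2 * k i := fun i =>
    (Nat.mul_div_cancel' ((heven i).two_dvd) ).symm
  -- value of μ on even numbers
  have hμval : ∀ j : ℕ, μ (2 * j) = 2 ^ j * Rpoch a j := by
    intro j
    rw [hμ]
    have h1 : ((2 * j : ℕ) : ℝ) / 2 = (j : ℝ) := by push_cast; ring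
    have h2 : ((p : ℝ) + (2 * j : ℕ)) / 2 = a + j := by push_cast; rw [ha_def]; ring
    rw [h1, h2, Gamma_Rpoch ha j, Real.rpow_natCast]
    rw [ha_def] at hΓa ⊢
    field_simp
  have hsum : ∑ i, d i = 2 * ∑ i, k i := by
    rw [Finset.mul_sum]; exact Finset.sum_congr rfl fun i _ => hdk i
  set K : ℕ := ∑ i, k i with hK_def
  have hnum : ∏ i, μ (d i) = 2 ^ K * ∏ i, Rpoch a (k i) := by
    calc ∏ i, μ (d i) = ∏ i, (2 ^ (k i) * Rpoch a (k i)) := by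
          refine Finset.prod_congr rfl fun i _ => ?_
          rw [hdk i, hμval]
      _ = (∏ i, (2:ℝ) ^ (k i)) * ∏ i, Rpoch a (k i) := Finset.prod_mul_distrib
      _ = 2 ^ K * ∏ i, Rpoch a (k i) := by
          rw [← Finset.prod_pow_eq_pow_sum]
  have hden : μ (∑ i, d i) = 2 ^ K * Rpoch a K := by
    rw [hsum, hμval]
  rw [hnum, hden]
  have h2K : (0:ℝ) < 2 ^ K := by positivity
  rw [mul_div_mul_left _ _ (ne_of_gt h2K)]
  obtain ⟨i₀, j₀, hne, hdi, hdj⟩ := htwo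
  have hki : 1 ≤ k i₀ := by
    by_contra h
    push_neg at h
    interval_cases h' : k i₀
    · rw [hdk i₀, h'] at hdi; simp at hdi
  have hkj : 1 ≤ k j₀ := by
    by_contra h
    push_neg at h
    interval_cases h' : k j₀
    · rw [hdk j₀, h'] at hdj; simp at hdj
  have hmain := Rpoch_main ha k i₀ j₀ hne hki hkj
  have hratio : a / (a + 1) = (p : ℝ) / (p + 2) := by
    rw [ha_def]
    have hp' : (0:ℝ) < p := by exact_mod_cast hp
    field_simp
  rw [div_le_iff₀ (Rpoch_pos ha K)]
  calc ∏ i, Rpoch a (k i) ≤ a / (a + 1) * Rpoch a K := hmain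
    _ = (p : ℝ) / (p + 2) * Rpoch a K := by rw [hratio]
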